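/- Let r ∈ [0,1], 0 < b < 1, 0 < e < 1, and p, q ≥ 0 with 0 < p + q ≤ 1. Then there exists δ* > 0 such that for every δ > δ*: the map F_{r,p,q,b,e,δ} has a unique fixed point θ* ∈ [0,1]² (i.e. a unique point with F(θ*) = θ*), and for every initial point θ₀ ∈ [0,1]² the iterates defined by θ_{k+1} = F(θ_k) converge to θ* as k → ∞. -/

import Mathlib

noncomputable def sVal (p q δ : ℝ) : ℝ := (p + q) * δ

noncomputable def aR (r p q δ t : ℝ) : ℝ := t + r * sVal p q δ

noncomputable def aB (r p q δ t : ℝ) : ℝ := 1 - t + (1 - r) * sVal p q δ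

noncomputable def P1RR (r p q b e δ x : ℝ) : ℝ :=
  e * aR r p q δ x / (1 + sVal p q δ - b * aB r p q δ x - (1 - e) * aR r p q δ x)

noncomputable def P1RB (r p q b e δ x : ℝ) : ℝ :=
  (1 - b) * aB r p q δ x / (1 + sVal p q δ - b * aB r p q δ x - (1 - e) * aR r p q δ x)

noncomputable def P1BR (r p q b e δ x : ℝ) : ℝ :=
  (1 - e) * aR r p q δ x / (1 + sVal p q δ - e * aR r p q δ x - (1 - b) * aB r p q δ x)

noncomputable def P1BB (r p q b e δ x : ℝ) : ℝ :=
  b * aB r p q δ x / (1 + sVal p q δ - e * aR r p q δ x - (1 - b) * aB r p q δ x)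

noncomputable def P2RR (r p q b e δ y : ℝ) : ℝ :=
  e * aR r p q δ y / (1 + sVal p q δ - e * aB r p q δ y - (1 - e) * aR r p q δ y)

noncomputable def P2RB (r p q b e δ y : ℝ) : ℝ :=
  (1 - e) * aB r p q δ y / (1 + sVal p q δ - e * aB r p q δ y - (1 - e) * aR r p q δ y)

noncomputable def P2BR (r p q b e δ y : ℝ) : ℝ :=
  (1 - b) * aR r p q δ y / (1 + sVal p q δ - b * aR r p q δ y - (1 - b) * aB r p q δ y)

noncomputable def P2BB (r p q b e δ y : ℝ) : ℝ :=
  b * aB r p q δ y / (1 + sVal p q δ - b * aR r p q δ y - (1 - b) * aB r p q δ y)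

noncomputable def D3 (r p q b e δ x y : ℝ) : ℝ :=
  (1 + sVal p q δ) ^ 2 - b * aR r p q δ y * aB r p q δ x - e * aR r p q δ x * aB r p q δ y
    - (1 - b) * aB r p q δ x * aB r p q δ y - (1 - e) * aR r p q δ x * aR r p q δ y

noncomputable def P3RR (r p q b e δ x y : ℝ) : ℝ :=
  e * aR r p q δ y * aR r p q δ x / D3 r p q b e δ x y

noncomputable def P3BR (r p q b e δ x y : ℝ) : ℝ :=
  (1 - e) * aB r p q δ y * aR r p q δ x / D3 r p q b e δ x y

noncomputable def P3RB (r p q b e δ x y : ℝ) : ℝ :=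
  (1 - b) * aR r p q δ y * aB r p q δ x / D3 r p q b e δ x y

noncomputable def P3BB (r p q b e δ x y : ℝ) : ℝ :=
  b * aB r p q δ y * aB r p q δ x / D3 r p q b e δ x y

noncomputable def F (r p q b e δ : ℝ) (θ : ℝ × ℝ) : ℝ × ℝ :=
  (p * (r * P1RR r p q b e δ θ.1 + (1 - r) * P1BR r p q b e δ θ.1) + q * r
      + (1 - p - q) * (P3RR r p q b e δ θ.1 θ.2 + P3BR r p q b e δ θ.1 θ.2),
   p * r + q * (r * P2RR r p q b e δ θ.2 + (1 - r) * P2BR r p q b e δ θ.2)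
      + (1 - p - q) * (P3RR r p q b e δ θ.1 θ.2 + P3RB r p q b e δ θ.1 θ.2))

noncomputable def Ci (r p q b e δ x y : ℝ) : ℝ :=
  p * r * e / (1 + sVal p q δ - b * aB r p q δ x - (1 - e) * aR r p q δ x)
    + p * (1 - r) * (1 - e) / (1 + sVal p q δ - e * aR r p q δ x - (1 - b) * aB r p q δ x)
    + (1 - p - q) * (e * aR r p q δ y + (1 - e) * aB r p q δ y) / D3 r p q b e δ x y

noncomputable def Co (r p q b e δ x y : ℝ) : ℝ :=
  q * r * e / (1 + sVal p q δ - e * aB r p q δ y - (1 - e) * aR r p q δ y)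
    + q * (1 - r) * (1 - b) / (1 + sVal p q δ - b * aR r p q δ y - (1 - b) * aB r p q δ y)
    + (1 - p - q) * (e * aR r p q δ x + (1 - b) * aB r p q δ x) / D3 r p q b e δ x y

noncomputable def CiB (r p q b e δ x y : ℝ) : ℝ := Ci (1 - r) p q e b δ (1 - x) (1 - y)

noncomputable def CoB (r p q b e δ x y : ℝ) : ℝ := Co (1 - r) p q e b δ (1 - x) (1 - y)

/- auxiliary general fraction lemmas -/

lemma key_div {n n' d d' D0 M : ℝ} (hD0 : 0 < D0) (hd : D0 ≤ d) (hd' : D0 ≤ d')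
    (h : |n * d' - n' * d| ≤ M) : |n / d - n' / d'| ≤ M / D0 ^ 2 := by
  have hd0 : 0 < d := lt_of_lt_of_le hD0 hd
  have hd0' : 0 < d' := lt_of_lt_of_le hD0 hd'
  have hM : 0 ≤ M := le_trans (abs_nonneg _) h
  have heq : n / d - n' / d' = (n * d' - n' * d) / (d * d') := by
    field_simp
  rw [heq, abs_div, abs_of_pos (mul_pos hd0 hd0')]
  apply div_le_div₀ hM h (by positivity)
  nlinarith

lemma frac_x {u v A B A' B' S U D0 : ℝ} (hD0 : 0 < D0) (hu : 0 ≤ u) (hv : 0 ≤ v)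
    (huU : u ≤ U) (hvU : v ≤ U) (hS : 0 ≤ S)
    (hd : D0 ≤ u * A + v * B) (hd' : D0 ≤ u * A' + v * B')
    (hAB : A + B = S) (hAB' : A' + B' = S) :
    |u * A / (u * A + v * B) - u * A' / (u * A' + v * B')| ≤ U ^ 2 * S * |A - A'| / D0 ^ 2 := by
  apply key_div hD0 hd hd'
  have hid : u * A * (u * A' + v * B') - u * A' * (u * A + v * B) = u * v * (S * (A - A')) := by
    have hB : B = S - A := by linarith
    have hB' : B' = S - A' := by linarith
    subst hB hB'; ring
  rw [hid]
  have h1 : |u * v * (S * (A - A'))| = u * v * (S * |A - A'|) := by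
    rw [abs_mul, abs_mul, abs_of_nonneg hu, abs_of_nonneg hv, abs_mul, abs_of_nonneg hS]
  rw [h1]
  nlinarith [abs_nonneg (A - A'), mul_nonneg hS (abs_nonneg (A - A')),
    mul_le_mul huU hvU hv (hu.trans huU)]

lemma frac_y {u v u' v' A B S U D0 Δ : ℝ} (hD0 : 0 < D0)
    (hu : 0 ≤ u) (huU : u ≤ U) (hv : 0 ≤ v) (hvU : v ≤ U)
    (hΔu : |u - u'| ≤ Δ) (hΔv : |v - v'| ≤ Δ)
    (hA : 0 ≤ A) (hAS : A ≤ S) (hB : 0 ≤ B) (hBS : B ≤ S)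
    (hd : D0 ≤ u * A + v * B) (hd' : D0 ≤ u' * A + v' * B) :
    |u * A / (u * A + v * B) - u' * A / (u' * A + v' * B)| ≤ S ^ 2 * (2 * U * Δ) / D0 ^ 2 := by
  apply key_div hD0 hd hd'
  have hid : u * A * (u' * A + v' * B) - u' * A * (u * A + v * B)
      = A * B * (u * (v' - v) + v * (u - u')) := by ring
  rw [hid]
  have hΔ0 : 0 ≤ Δ := le_trans (abs_nonneg _) hΔu
  have h2 : |u * (v' - v)| ≤ U * Δ := by
    rw [abs_mul, abs_of_nonneg hu]
    have hv'' : |v' - v| ≤ Δ := by rw [abs_sub_comm]; exact hΔv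
    nlinarith [abs_nonneg (v' - v)]
  have h3 : |v * (u - u')| ≤ U * Δ := by
    rw [abs_mul, abs_of_nonneg hv]
    nlinarith [abs_nonneg (u - u')]
  have h4 : |u * (v' - v) + v * (u - u')| ≤ 2 * U * Δ := by
    calc |u * (v' - v) + v * (u - u')| ≤ |u * (v' - v)| + |v * (u - u')| := abs_add_le _ _
      _ ≤ U * Δ + U * Δ := add_le_add h2 h3
      _ = 2 * U * Δ := by ring
  calc |A * B * (u * (v' - v) + v * (u - u'))|
      = A * B * |u * (v' - v) + v * (u - u')| := by
        rw [abs_mul, abs_of_nonneg (mul_nonneg hA hB)]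
    _ ≤ S ^ 2 * (2 * U * Δ) := by
        nlinarith [abs_nonneg (u * (v' - v) + v * (u - u')),
          mul_le_mul hAS hBS hB (hA.trans hAS)]

/- combination helper -/

noncomputable def cmb (r p q δ c1 c2 t : ℝ) : ℝ := c1 * aR r p q δ t + c2 * aB r p q δ t

lemma aRB_sum (r p q δ t : ℝ) : aR r p q δ t + aB r p q δ t = 1 + sVal p q δ := by
  unfold aR aB; ring

lemma aR_mem (r p q δ t : ℝ) (hr0 : 0 ≤ r) (hr1 : r ≤ 1) (hs : 0 ≤ sVal p q δ)
    (ht0 : 0 ≤ t) (ht1 : t ≤ 1) :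
    0 ≤ aR r p q δ t ∧ aR r p q δ t ≤ 1 + sVal p q δ ∧
    0 ≤ aB r p q δ t ∧ aB r p q δ t ≤ 1 + sVal p q δ := by
  unfold aR aB
  have h1 : 0 ≤ r * sVal p q δ := mul_nonneg hr0 hs
  have h2 : r * sVal p q δ ≤ sVal p q δ := by nlinarith
  have h3 : 0 ≤ (1 - r) * sVal p q δ := mul_nonneg (by linarith) hs
  have h4 : (1 - r) * sVal p q δ ≤ sVal p q δ := by nlinarith
  exact ⟨by linarith, by linarith, by linarith, by linarith⟩

lemma cmb_ge (r p q δ c1 c2 t mm : ℝ) (hr0 : 0 ≤ r) (hr1 : r ≤ 1) (hs : 0 ≤ sVal p q δ)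
    (ht0 : 0 ≤ t) (ht1 : t ≤ 1) (hm0 : 0 ≤ mm) (h1 : mm ≤ c1) (h2 : mm ≤ c2) :
    mm * (1 + sVal p q δ) ≤ cmb r p q δ c1 c2 t := by
  obtain ⟨a0, a1, b0, b1⟩ := aR_mem r p q δ t hr0 hr1 hs ht0 ht1
  have hsum := aRB_sum r p q δ t
  unfold cmb
  nlinarith

lemma cmb_le (r p q δ c1 c2 t : ℝ) (hr0 : 0 ≤ r) (hr1 : r ≤ 1) (hs : 0 ≤ sVal p q δ)
    (ht0 : 0 ≤ t) (ht1 : t ≤ 1) (h10 : 0 ≤ c1) (h11 : c1 ≤ 1) (h20 : 0 ≤ c2) (h21 : c2 ≤ 1) :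
    cmb r p q δ c1 c2 t ≤ 1 + sVal p q δ := by
  obtain ⟨a0, a1, b0, b1⟩ := aR_mem r p q δ t hr0 hr1 hs ht0 ht1
  have hsum := aRB_sum r p q δ t
  unfold cmb
  nlinarith

lemma cmb_lip (r p q δ c1 c2 t t' : ℝ) (h10 : 0 ≤ c1) (h11 : c1 ≤ 1) (h20 : 0 ≤ c2)
    (h21 : c2 ≤ 1) : |cmb r p q δ c1 c2 t - cmb r p q δ c1 c2 t'| ≤ |t - t'| := by
  have h : cmb r p q δ c1 c2 t - cmb r p q δ c1 c2 t' = (c1 - c2) * (t - t') := by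
    unfold cmb aR aB; ring
  rw [h, abs_mul]
  have h : |c1 - c2| ≤ 1 := abs_le.mpr ⟨by linarith, by linarith⟩
  nlinarith [abs_nonneg (t - t')]

/- representation lemmas -/

lemma P1RR_eq (r p q b e δ x : ℝ) :
    P1RR r p q b e δ x = e * aR r p q δ x / cmb r p q δ e (1 - b) x := by
  unfold P1RR cmb; congr 1; unfold aR aB; ring

lemma P1BR_eq (r p q b e δ x : ℝ) :
    P1BR r p q b e δ x = (1 - e) * aR r p q δ x / cmb r p q δ (1 - e) b x := by
  unfold P1BR cmb; congr 1; unfold aR aB; ring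

lemma P2RR_eq (r p q b e δ y : ℝ) :
    P2RR r p q b e δ y = e * aR r p q δ y / cmb r p q δ e (1 - e) y := by
  unfold P2RR cmb; congr 1; unfold aR aB; ring

lemma P2BR_eq (r p q b e δ y : ℝ) :
    P2BR r p q b e δ y = (1 - b) * aR r p q δ y / cmb r p q δ (1 - b) b y := by
  unfold P2BR cmb; congr 1; unfold aR aB; ring

lemma G_eq (r p q b e δ x y : ℝ) :
    P3RR r p q b e δ x y + P3BR r p q b e δ x y =
      cmb r p q δ e (1 - e) y * aR r p q δ x /
        (cmb r p q δ e (1 - e) y * aR r p q δ x + cmb r p q δ (1 - b) b y * aB r p q δ x) := by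
  unfold P3RR P3BR
  rw [← add_div]
  congr 1
  · unfold cmb; ring
  · unfold D3 cmb aR aB; ring

lemma H_eq (r p q b e δ x y : ℝ) :
    P3RR r p q b e δ x y + P3RB r p q b e δ x y =
      cmb r p q δ e (1 - b) x * aR r p q δ y /
        (cmb r p q δ e (1 - b) x * aR r p q δ y + cmb r p q δ (1 - e) b x * aB r p q δ y) := by
  unfold P3RR P3RB
  rw [← add_div]
  congr 1
  · unfold cmb; ring
  · unfold D3 cmb aR aB; ring
lemma onevar_diff (r p q δ c1 c2 x x' mm : ℝ) (hr0 : 0 ≤ r) (hr1 : r ≤ 1)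
    (hs : 0 ≤ sVal p q δ) (hx0 : 0 ≤ x) (hx1 : x ≤ 1) (hx0' : 0 ≤ x') (hx1' : x' ≤ 1)
    (hm0 : 0 < mm) (h1 : mm ≤ c1) (h1' : c1 ≤ 1) (h2 : mm ≤ c2) (h2' : c2 ≤ 1) :
    |c1 * aR r p q δ x / cmb r p q δ c1 c2 x - c1 * aR r p q δ x' / cmb r p q δ c1 c2 x'|
      ≤ |x - x'| / (mm ^ 2 * (1 + sVal p q δ)) := by
  have hS0 : (0:ℝ) < 1 + sVal p q δ := by linarith
  have hc10 : 0 ≤ c1 := by linarith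
  have hc20 : 0 ≤ c2 := by linarith
  have hd := cmb_ge r p q δ c1 c2 x mm hr0 hr1 hs hx0 hx1 hm0.le h1 h2
  have hd' := cmb_ge r p q δ c1 c2 x' mm hr0 hr1 hs hx0' hx1' hm0.le h1 h2
  unfold cmb at hd hd' ⊢
  have h := frac_x (U := (1:ℝ)) (S := 1 + sVal p q δ) (D0 := mm * (1 + sVal p q δ))
    (by positivity) hc10 hc20 h1' h2' hS0.le hd hd' (aRB_sum r p q δ x) (aRB_sum r p q δ x')
  have hxx : aR r p q δ x - aR r p q δ x' = x - x' := by unfold aR; ring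
  rw [hxx] at h
  refine h.trans (le_of_eq ?_)
  field_simp

lemma G_diff_x (r p q b e δ x x' y mm : ℝ) (hr0 : 0 ≤ r) (hr1 : r ≤ 1)
    (hs : 0 ≤ sVal p q δ) (hx0 : 0 ≤ x) (hx1 : x ≤ 1) (hx0' : 0 ≤ x') (hx1' : x' ≤ 1)
    (hy0 : 0 ≤ y) (hy1 : y ≤ 1)
    (hm0 : 0 < mm) (h1 : mm ≤ e) (h1' : e ≤ 1) (h2 : mm ≤ 1 - e)
    (h3 : mm ≤ b) (h3' : b ≤ 1) (h4 : mm ≤ 1 - b) :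
    |cmb r p q δ e (1 - e) y * aR r p q δ x /
        (cmb r p q δ e (1 - e) y * aR r p q δ x + cmb r p q δ (1 - b) b y * aB r p q δ x) -
      cmb r p q δ e (1 - e) y * aR r p q δ x' /
        (cmb r p q δ e (1 - e) y * aR r p q δ x' + cmb r p q δ (1 - b) b y * aB r p q δ x')|
      ≤ |x - x'| / (mm ^ 2 * (1 + sVal p q δ)) := by
  have hS0 : (0:ℝ) < 1 + sVal p q δ := by linarith
  have hu1 := cmb_ge r p q δ e (1 - e) y mm hr0 hr1 hs hy0 hy1 hm0.le h1 h2
  have hu2 := cmb_le r p q δ e (1 - e) y hr0 hr1 hs hy0 hy1 (by linarith) h1' (by linarith) (by linarith)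
  have hv1 := cmb_ge r p q δ (1 - b) b y mm hr0 hr1 hs hy0 hy1 hm0.le h4 h3
  have hv2 := cmb_le r p q δ (1 - b) b y hr0 hr1 hs hy0 hy1 (by linarith) (by linarith) (by linarith) h3'
  have hu0 : 0 ≤ cmb r p q δ e (1 - e) y := le_trans (by positivity) hu1
  have hv0 : 0 ≤ cmb r p q δ (1 - b) b y := le_trans (by positivity) hv1
  obtain ⟨a0, a1, b0, b1⟩ := aR_mem r p q δ x hr0 hr1 hs hx0 hx1
  obtain ⟨a0', a1', b0', b1'⟩ := aR_mem r p q δ x' hr0 hr1 hs hx0' hx1'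
  have hsx := aRB_sum r p q δ x
  have hsx' := aRB_sum r p q δ x'
  have hd : mm * (1 + sVal p q δ) ^ 2 ≤
      cmb r p q δ e (1 - e) y * aR r p q δ x + cmb r p q δ (1 - b) b y * aB r p q δ x := by
    nlinarith
  have hd' : mm * (1 + sVal p q δ) ^ 2 ≤
      cmb r p q δ e (1 - e) y * aR r p q δ x' + cmb r p q δ (1 - b) b y * aB r p q δ x' := by
    nlinarith
  have h := frac_x (U := 1 + sVal p q δ) (S := 1 + sVal p q δ)
    (D0 := mm * (1 + sVal p q δ) ^ 2) (by positivity) hu0 hv0 hu2 hv2 hS0.le hd hd' hsx hsx'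
  have hxx : aR r p q δ x - aR r p q δ x' = x - x' := by unfold aR; ring
  rw [hxx] at h
  refine h.trans (le_of_eq ?_)
  field_simp

lemma G_diff_y (r p q b e δ x y y' mm : ℝ) (hr0 : 0 ≤ r) (hr1 : r ≤ 1)
    (hs : 0 ≤ sVal p q δ) (hx0 : 0 ≤ x) (hx1 : x ≤ 1) (hy0 : 0 ≤ y) (hy1 : y ≤ 1)
    (hy0' : 0 ≤ y') (hy1' : y' ≤ 1)
    (hm0 : 0 < mm) (h1 : mm ≤ e) (h1' : e ≤ 1) (h2 : mm ≤ 1 - e)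
    (h3 : mm ≤ b) (h3' : b ≤ 1) (h4 : mm ≤ 1 - b) :
    |cmb r p q δ e (1 - e) y * aR r p q δ x /
        (cmb r p q δ e (1 - e) y * aR r p q δ x + cmb r p q δ (1 - b) b y * aB r p q δ x) -
      cmb r p q δ e (1 - e) y' * aR r p q δ x /
        (cmb r p q δ e (1 - e) y' * aR r p q δ x + cmb r p q δ (1 - b) b y' * aB r p q δ x)|
      ≤ 2 * |y - y'| / (mm ^ 2 * (1 + sVal p q δ)) := by
  have hS0 : (0:ℝ) < 1 + sVal p q δ := by linarith
  have hu1 := cmb_ge r p q δ e (1 - e) y mm hr0 hr1 hs hy0 hy1 hm0.le h1 h2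
  have hu2 := cmb_le r p q δ e (1 - e) y hr0 hr1 hs hy0 hy1 (by linarith) h1' (by linarith) (by linarith)
  have hv1 := cmb_ge r p q δ (1 - b) b y mm hr0 hr1 hs hy0 hy1 hm0.le h4 h3
  have hu1' := cmb_ge r p q δ e (1 - e) y' mm hr0 hr1 hs hy0' hy1' hm0.le h1 h2
  have hv1' := cmb_ge r p q δ (1 - b) b y' mm hr0 hr1 hs hy0' hy1' hm0.le h4 h3
  have hu0 : 0 ≤ cmb r p q δ e (1 - e) y := le_trans (by positivity) hu1
  have hv0 : 0 ≤ cmb r p q δ (1 - b) b y := le_trans (by positivity) hv1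
  have hv2 := cmb_le r p q δ (1 - b) b y hr0 hr1 hs hy0 hy1 (by linarith) (by linarith) (by linarith) h3'
  obtain ⟨a0, a1, b0, b1⟩ := aR_mem r p q δ x hr0 hr1 hs hx0 hx1
  have hsx := aRB_sum r p q δ x
  have hΔu := cmb_lip r p q δ e (1 - e) y y' (by linarith) h1' (by linarith) (by linarith)
  have hΔv := cmb_lip r p q δ (1 - b) b y y' (by linarith) (by linarith) (by linarith) h3'
  have hd : mm * (1 + sVal p q δ) ^ 2 ≤
      cmb r p q δ e (1 - e) y * aR r p q δ x + cmb r p q δ (1 - b) b y * aB r p q δ x := by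
    nlinarith
  have hd' : mm * (1 + sVal p q δ) ^ 2 ≤
      cmb r p q δ e (1 - e) y' * aR r p q δ x + cmb r p q δ (1 - b) b y' * aB r p q δ x := by
    nlinarith
  have h := frac_y (U := 1 + sVal p q δ) (S := 1 + sVal p q δ)
    (D0 := mm * (1 + sVal p q δ) ^ 2) (Δ := |y - y'|) (by positivity)
    hu0 hu2 hv0 hv2 hΔu hΔv a0 a1 b0 b1 hd hd'
  refine h.trans (le_of_eq ?_)
  field_simp
lemma H_diff_y (r p q b e δ x y y' mm : ℝ) (hr0 : 0 ≤ r) (hr1 : r ≤ 1)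
    (hs : 0 ≤ sVal p q δ) (hx0 : 0 ≤ x) (hx1 : x ≤ 1) (hy0 : 0 ≤ y) (hy1 : y ≤ 1)
    (hy0' : 0 ≤ y') (hy1' : y' ≤ 1)
    (hm0 : 0 < mm) (h1 : mm ≤ e) (h1' : e ≤ 1) (h2 : mm ≤ 1 - e)
    (h3 : mm ≤ b) (h3' : b ≤ 1) (h4 : mm ≤ 1 - b) :
    |cmb r p q δ e (1 - b) x * aR r p q δ y /
        (cmb r p q δ e (1 - b) x * aR r p q δ y + cmb r p q δ (1 - e) b x * aB r p q δ y) -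
      cmb r p q δ e (1 - b) x * aR r p q δ y' /
        (cmb r p q δ e (1 - b) x * aR r p q δ y' + cmb r p q δ (1 - e) b x * aB r p q δ y')|
      ≤ |y - y'| / (mm ^ 2 * (1 + sVal p q δ)) := by
  have hS0 : (0:ℝ) < 1 + sVal p q δ := by linarith
  have hu1 := cmb_ge r p q δ e (1 - b) x mm hr0 hr1 hs hx0 hx1 hm0.le h1 h4
  have hu2 := cmb_le r p q δ e (1 - b) x hr0 hr1 hs hx0 hx1 (by linarith) h1' (by linarith) (by linarith)
  have hv1 := cmb_ge r p q δ (1 - e) b x mm hr0 hr1 hs hx0 hx1 hm0.le h2 h3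
  have hv2 := cmb_le r p q δ (1 - e) b x hr0 hr1 hs hx0 hx1 (by linarith) (by linarith) (by linarith) h3'
  have hu0 : 0 ≤ cmb r p q δ e (1 - b) x := le_trans (by positivity) hu1
  have hv0 : 0 ≤ cmb r p q δ (1 - e) b x := le_trans (by positivity) hv1
  obtain ⟨a0, a1, b0, b1⟩ := aR_mem r p q δ y hr0 hr1 hs hy0 hy1
  obtain ⟨a0', a1', b0', b1'⟩ := aR_mem r p q δ y' hr0 hr1 hs hy0' hy1'
  have hsy := aRB_sum r p q δ y
  have hsy' := aRB_sum r p q δ y'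
  have hd : mm * (1 + sVal p q δ) ^ 2 ≤
      cmb r p q δ e (1 - b) x * aR r p q δ y + cmb r p q δ (1 - e) b x * aB r p q δ y := by
    nlinarith
  have hd' : mm * (1 + sVal p q δ) ^ 2 ≤
      cmb r p q δ e (1 - b) x * aR r p q δ y' + cmb r p q δ (1 - e) b x * aB r p q δ y' := by
    nlinarith
  have h := frac_x (U := 1 + sVal p q δ) (S := 1 + sVal p q δ)
    (D0 := mm * (1 + sVal p q δ) ^ 2) (by positivity) hu0 hv0 hu2 hv2 hS0.le hd hd' hsy hsy'
  have hyy : aR r p q δ y - aR r p q δ y' = y - y' := by unfold aR; ring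
  rw [hyy] at h
  refine h.trans (le_of_eq ?_)
  field_simp

lemma H_diff_x (r p q b e δ x x' y mm : ℝ) (hr0 : 0 ≤ r) (hr1 : r ≤ 1)
    (hs : 0 ≤ sVal p q δ) (hx0 : 0 ≤ x) (hx1 : x ≤ 1) (hx0' : 0 ≤ x') (hx1' : x' ≤ 1)
    (hy0 : 0 ≤ y) (hy1 : y ≤ 1)
    (hm0 : 0 < mm) (h1 : mm ≤ e) (h1' : e ≤ 1) (h2 : mm ≤ 1 - e)
    (h3 : mm ≤ b) (h3' : b ≤ 1) (h4 : mm ≤ 1 - b) :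
    |cmb r p q δ e (1 - b) x * aR r p q δ y /
        (cmb r p q δ e (1 - b) x * aR r p q δ y + cmb r p q δ (1 - e) b x * aB r p q δ y) -
      cmb r p q δ e (1 - b) x' * aR r p q δ y /
        (cmb r p q δ e (1 - b) x' * aR r p q δ y + cmb r p q δ (1 - e) b x' * aB r p q δ y)|
      ≤ 2 * |x - x'| / (mm ^ 2 * (1 + sVal p q δ)) := by
  have hS0 : (0:ℝ) < 1 + sVal p q δ := by linarith
  have hu1 := cmb_ge r p q δ e (1 - b) x mm hr0 hr1 hs hx0 hx1 hm0.le h1 h4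
  have hu2 := cmb_le r p q δ e (1 - b) x hr0 hr1 hs hx0 hx1 (by linarith) h1' (by linarith) (by linarith)
  have hv1 := cmb_ge r p q δ (1 - e) b x mm hr0 hr1 hs hx0 hx1 hm0.le h2 h3
  have hv2 := cmb_le r p q δ (1 - e) b x hr0 hr1 hs hx0 hx1 (by linarith) (by linarith) (by linarith) h3'
  have hu1' := cmb_ge r p q δ e (1 - b) x' mm hr0 hr1 hs hx0' hx1' hm0.le h1 h4
  have hv1' := cmb_ge r p q δ (1 - e) b x' mm hr0 hr1 hs hx0' hx1' hm0.le h2 h3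
  have hu0 : 0 ≤ cmb r p q δ e (1 - b) x := le_trans (by positivity) hu1
  have hv0 : 0 ≤ cmb r p q δ (1 - e) b x := le_trans (by positivity) hv1
  obtain ⟨a0, a1, b0, b1⟩ := aR_mem r p q δ y hr0 hr1 hs hy0 hy1
  have hsy := aRB_sum r p q δ y
  have hΔu := cmb_lip r p q δ e (1 - b) x x' (by linarith) h1' (by linarith) (by linarith)
  have hΔv := cmb_lip r p q δ (1 - e) b x x' (by linarith) (by linarith) (by linarith) h3'
  have hd : mm * (1 + sVal p q δ) ^ 2 ≤
      cmb r p q δ e (1 - b) x * aR r p q δ y + cmb r p q δ (1 - e) b x * aB r p q δ y := by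
    nlinarith
  have hd' : mm * (1 + sVal p q δ) ^ 2 ≤
      cmb r p q δ e (1 - b) x' * aR r p q δ y + cmb r p q δ (1 - e) b x' * aB r p q δ y := by
    nlinarith
  have h := frac_y (U := 1 + sVal p q δ) (S := 1 + sVal p q δ)
    (D0 := mm * (1 + sVal p q δ) ^ 2) (Δ := |x - x'|) (by positivity)
    hu0 hu2 hv0 hv2 hΔu hΔv a0 a1 b0 b1 hd hd'
  refine h.trans (le_of_eq ?_)
  field_simp
set_option maxHeartbeats 1000000 in
lemma F_lip (r p q b e δ x y x' y' mm : ℝ)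
    (hr0 : 0 ≤ r) (hr1 : r ≤ 1) (hp : 0 ≤ p) (hq : 0 ≤ q) (hpq : p + q ≤ 1)
    (hs : 0 ≤ sVal p q δ)
    (hm0 : 0 < mm) (hme : mm ≤ e) (hme' : mm ≤ 1 - e) (hmb : mm ≤ b) (hmb' : mm ≤ 1 - b)
    (hbig : 8 ≤ mm ^ 2 * (1 + sVal p q δ))
    (hx0 : 0 ≤ x) (hx1 : x ≤ 1) (hy0 : 0 ≤ y) (hy1 : y ≤ 1)
    (hx0' : 0 ≤ x') (hx1' : x' ≤ 1) (hy0' : 0 ≤ y') (hy1' : y' ≤ 1) :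
    |(F r p q b e δ (x, y)).1 - (F r p q b e δ (x', y')).1| ≤ 1 / 2 * max |x - x'| |y - y'| ∧
    |(F r p q b e δ (x, y)).2 - (F r p q b e δ (x', y')).2| ≤ 1 / 2 * max |x - x'| |y - y'| := by
  have he1 : e ≤ 1 := by linarith
  have hb1 : b ≤ 1 := by linarith
  have hS0 : (0:ℝ) < 1 + sVal p q δ := by linarith
  have hL0 : (0:ℝ) < mm ^ 2 * (1 + sVal p q δ) := by positivity
  set d := max |x - x'| |y - y'| with hdd
  have hdx : |x - x'| ≤ d := le_max_left _ _
  have hdy : |y - y'| ≤ d := le_max_right _ _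
  have hd0 : 0 ≤ d := le_trans (abs_nonneg _) hdx
  clear_value d
  -- one-variable bounds
  have h1 : |P1RR r p q b e δ x - P1RR r p q b e δ x'| ≤ d / (mm ^ 2 * (1 + sVal p q δ)) := by
    rw [P1RR_eq, P1RR_eq]
    exact (onevar_diff r p q δ e (1 - b) x x' mm hr0 hr1 hs hx0 hx1 hx0' hx1' hm0 hme he1
      hmb' (by linarith)).trans (by gcongr)
  have h2 : |P1BR r p q b e δ x - P1BR r p q b e δ x'| ≤ d / (mm ^ 2 * (1 + sVal p q δ)) := by
    rw [P1BR_eq, P1BR_eq]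
    exact (onevar_diff r p q δ (1 - e) b x x' mm hr0 hr1 hs hx0 hx1 hx0' hx1' hm0 hme'
      (by linarith) hmb hb1).trans (by gcongr)
  have h3 : |P2RR r p q b e δ y - P2RR r p q b e δ y'| ≤ d / (mm ^ 2 * (1 + sVal p q δ)) := by
    rw [P2RR_eq, P2RR_eq]
    exact (onevar_diff r p q δ e (1 - e) y y' mm hr0 hr1 hs hy0 hy1 hy0' hy1' hm0 hme he1
      hme' (by linarith)).trans (by gcongr)
  have h4 : |P2BR r p q b e δ y - P2BR r p q b e δ y'| ≤ d / (mm ^ 2 * (1 + sVal p q δ)) := by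
    rw [P2BR_eq, P2BR_eq]
    exact (onevar_diff r p q δ (1 - b) b y y' mm hr0 hr1 hs hy0 hy1 hy0' hy1' hm0 hmb'
      (by linarith) hmb hb1).trans (by gcongr)
  -- two-variable bounds
  have hG : |(P3RR r p q b e δ x y + P3BR r p q b e δ x y) -
      (P3RR r p q b e δ x' y' + P3BR r p q b e δ x' y')|
      ≤ 3 * (d / (mm ^ 2 * (1 + sVal p q δ))) := by
    rw [G_eq, G_eq]
    have hGx := G_diff_x r p q b e δ x x' y mm hr0 hr1 hs hx0 hx1 hx0' hx1' hy0 hy1 hm0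
      hme he1 hme' hmb hb1 hmb'
    have hGy := G_diff_y r p q b e δ x' y y' mm hr0 hr1 hs hx0' hx1' hy0 hy1 hy0' hy1' hm0
      hme he1 hme' hmb hb1 hmb'
    calc _ ≤ _ := abs_sub_le _ (cmb r p q δ e (1 - e) y * aR r p q δ x' /
          (cmb r p q δ e (1 - e) y * aR r p q δ x' + cmb r p q δ (1 - b) b y * aB r p q δ x')) _
      _ ≤ |x - x'| / (mm ^ 2 * (1 + sVal p q δ)) + 2 * |y - y'| / (mm ^ 2 * (1 + sVal p q δ)) :=
          add_le_add hGx hGy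
      _ ≤ d / (mm ^ 2 * (1 + sVal p q δ)) + 2 * d / (mm ^ 2 * (1 + sVal p q δ)) := by gcongr
      _ = 3 * (d / (mm ^ 2 * (1 + sVal p q δ))) := by ring
  have hH : |(P3RR r p q b e δ x y + P3RB r p q b e δ x y) -
      (P3RR r p q b e δ x' y' + P3RB r p q b e δ x' y')|
      ≤ 3 * (d / (mm ^ 2 * (1 + sVal p q δ))) := by
    rw [H_eq, H_eq]
    have hHy := H_diff_y r p q b e δ x y y' mm hr0 hr1 hs hx0 hx1 hy0 hy1 hy0' hy1' hm0
      hme he1 hme' hmb hb1 hmb'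
    have hHx := H_diff_x r p q b e δ x x' y' mm hr0 hr1 hs hx0 hx1 hx0' hx1' hy0' hy1' hm0
      hme he1 hme' hmb hb1 hmb'
    calc _ ≤ _ := abs_sub_le _ (cmb r p q δ e (1 - b) x * aR r p q δ y' /
          (cmb r p q δ e (1 - b) x * aR r p q δ y' + cmb r p q δ (1 - e) b x * aB r p q δ y')) _
      _ ≤ |y - y'| / (mm ^ 2 * (1 + sVal p q δ)) + 2 * |x - x'| / (mm ^ 2 * (1 + sVal p q δ)) :=
          add_le_add hHy hHx
      _ ≤ d / (mm ^ 2 * (1 + sVal p q δ)) + 2 * d / (mm ^ 2 * (1 + sVal p q δ)) := by gcongr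
      _ = 3 * (d / (mm ^ 2 * (1 + sVal p q δ))) := by ring
  have hdL8 : d / (mm ^ 2 * (1 + sVal p q δ)) ≤ d / 8 := by gcongr
  have hdL0 : 0 ≤ d / (mm ^ 2 * (1 + sVal p q δ)) := div_nonneg hd0 hL0.le
  constructor
  · have hrep : (F r p q b e δ (x, y)).1 - (F r p q b e δ (x', y')).1 =
        p * r * (P1RR r p q b e δ x - P1RR r p q b e δ x')
        + p * (1 - r) * (P1BR r p q b e δ x - P1BR r p q b e δ x')
        + (1 - p - q) * ((P3RR r p q b e δ x y + P3BR r p q b e δ x y)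
            - (P3RR r p q b e δ x' y' + P3BR r p q b e δ x' y')) := by
      simp only [F]; ring
    rw [hrep]
    have hA : |p * r * (P1RR r p q b e δ x - P1RR r p q b e δ x')|
        ≤ p * r * (d / (mm ^ 2 * (1 + sVal p q δ))) := by
      rw [abs_mul, abs_of_nonneg (mul_nonneg hp hr0)]
      exact mul_le_mul_of_nonneg_left h1 (mul_nonneg hp hr0)
    have hB : |p * (1 - r) * (P1BR r p q b e δ x - P1BR r p q b e δ x')|
        ≤ p * (1 - r) * (d / (mm ^ 2 * (1 + sVal p q δ))) := by
      rw [abs_mul, abs_of_nonneg (mul_nonneg hp (by linarith : (0:ℝ) ≤ 1 - r))]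
      exact mul_le_mul_of_nonneg_left h2 (mul_nonneg hp (by linarith))
    have hC : |(1 - p - q) * ((P3RR r p q b e δ x y + P3BR r p q b e δ x y)
        - (P3RR r p q b e δ x' y' + P3BR r p q b e δ x' y'))|
        ≤ (1 - p - q) * (3 * (d / (mm ^ 2 * (1 + sVal p q δ)))) := by
      rw [abs_mul, abs_of_nonneg (by linarith : (0:ℝ) ≤ 1 - p - q)]
      exact mul_le_mul_of_nonneg_left hG (by linarith)
    have step1 := abs_add_le (p * r * (P1RR r p q b e δ x - P1RR r p q b e δ x')
        + p * (1 - r) * (P1BR r p q b e δ x - P1BR r p q b e δ x'))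
        ((1 - p - q) * ((P3RR r p q b e δ x y + P3BR r p q b e δ x y)
            - (P3RR r p q b e δ x' y' + P3BR r p q b e δ x' y')))
    have step2 := abs_add_le (p * r * (P1RR r p q b e δ x - P1RR r p q b e δ x'))
        (p * (1 - r) * (P1BR r p q b e δ x - P1BR r p q b e δ x'))
    have hcoef : p * r + p * (1 - r) + (1 - p - q) * 3 ≤ 4 := by linarith
    have hcoef0 : 0 ≤ p * r + p * (1 - r) + (1 - p - q) * 3 := by linarith
    have hfin : (p * r + p * (1 - r) + (1 - p - q) * 3) * (d / (mm ^ 2 * (1 + sVal p q δ)))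
        ≤ 1 / 2 * d := by
      linarith [mul_le_mul_of_nonneg_right hcoef hdL0,
        mul_le_mul_of_nonneg_left hdL8 (by norm_num : (0:ℝ) ≤ 4)]
    linarith [step1, step2, hA, hB, hC, hfin]
  · have hrep : (F r p q b e δ (x, y)).2 - (F r p q b e δ (x', y')).2 =
        q * r * (P2RR r p q b e δ y - P2RR r p q b e δ y')
        + q * (1 - r) * (P2BR r p q b e δ y - P2BR r p q b e δ y')
        + (1 - p - q) * ((P3RR r p q b e δ x y + P3RB r p q b e δ x y)
            - (P3RR r p q b e δ x' y' + P3RB r p q b e δ x' y')) := by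
      simp only [F]; ring
    rw [hrep]
    have hA : |q * r * (P2RR r p q b e δ y - P2RR r p q b e δ y')|
        ≤ q * r * (d / (mm ^ 2 * (1 + sVal p q δ))) := by
      rw [abs_mul, abs_of_nonneg (mul_nonneg hq hr0)]
      exact mul_le_mul_of_nonneg_left h3 (mul_nonneg hq hr0)
    have hB : |q * (1 - r) * (P2BR r p q b e δ y - P2BR r p q b e δ y')|
        ≤ q * (1 - r) * (d / (mm ^ 2 * (1 + sVal p q δ))) := by
      rw [abs_mul, abs_of_nonneg (mul_nonneg hq (by linarith : (0:ℝ) ≤ 1 - r))]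
      exact mul_le_mul_of_nonneg_left h4 (mul_nonneg hq (by linarith))
    have hC : |(1 - p - q) * ((P3RR r p q b e δ x y + P3RB r p q b e δ x y)
        - (P3RR r p q b e δ x' y' + P3RB r p q b e δ x' y'))|
        ≤ (1 - p - q) * (3 * (d / (mm ^ 2 * (1 + sVal p q δ)))) := by
      rw [abs_mul, abs_of_nonneg (by linarith : (0:ℝ) ≤ 1 - p - q)]
      exact mul_le_mul_of_nonneg_left hH (by linarith)
    have step1 := abs_add_le (q * r * (P2RR r p q b e δ y - P2RR r p q b e δ y')
        + q * (1 - r) * (P2BR r p q b e δ y - P2BR r p q b e δ y'))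
        ((1 - p - q) * ((P3RR r p q b e δ x y + P3RB r p q b e δ x y)
            - (P3RR r p q b e δ x' y' + P3RB r p q b e δ x' y')))
    have step2 := abs_add_le (q * r * (P2RR r p q b e δ y - P2RR r p q b e δ y'))
        (q * (1 - r) * (P2BR r p q b e δ y - P2BR r p q b e δ y'))
    have hcoef : q * r + q * (1 - r) + (1 - p - q) * 3 ≤ 4 := by linarith
    have hcoef0 : 0 ≤ q * r + q * (1 - r) + (1 - p - q) * 3 := by linarith
    have hfin : (q * r + q * (1 - r) + (1 - p - q) * 3) * (d / (mm ^ 2 * (1 + sVal p q δ)))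
        ≤ 1 / 2 * d := by
      linarith [mul_le_mul_of_nonneg_right hcoef hdL0,
        mul_le_mul_of_nonneg_left hdL8 (by norm_num : (0:ℝ) ≤ 4)]
    linarith [step1, step2, hA, hB, hC, hfin]
set_option maxHeartbeats 1600000 in
lemma F_maps (r p q b e δ x y mm : ℝ)
    (hr0 : 0 ≤ r) (hr1 : r ≤ 1) (hp : 0 ≤ p) (hq : 0 ≤ q) (hpq : p + q ≤ 1)
    (hs : 0 ≤ sVal p q δ)
    (hm0 : 0 < mm) (hme : mm ≤ e) (hme' : mm ≤ 1 - e) (hmb : mm ≤ b) (hmb' : mm ≤ 1 - b)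
    (hx0 : 0 ≤ x) (hx1 : x ≤ 1) (hy0 : 0 ≤ y) (hy1 : y ≤ 1) :
    F r p q b e δ (x, y) ∈ Set.Icc (0:ℝ) 1 ×ˢ Set.Icc (0:ℝ) 1 := by
  have he1 : e ≤ 1 := by linarith
  have hb1 : b ≤ 1 := by linarith
  have hS0 : (0:ℝ) < 1 + sVal p q δ := by linarith
  have hfrac : ∀ c1 c2 t : ℝ, mm ≤ c1 → c1 ≤ 1 → mm ≤ c2 → c2 ≤ 1 → 0 ≤ t → t ≤ 1 →
      0 ≤ c1 * aR r p q δ t / cmb r p q δ c1 c2 t ∧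
      c1 * aR r p q δ t / cmb r p q δ c1 c2 t ≤ 1 := by
    intro c1 c2 t h1 h1' h2 h2' ht0 ht1
    have hge := cmb_ge r p q δ c1 c2 t mm hr0 hr1 hs ht0 ht1 hm0.le h1 h2
    have hD : 0 < cmb r p q δ c1 c2 t := lt_of_lt_of_le (by positivity) hge
    obtain ⟨a0, a1, b0, b1⟩ := aR_mem r p q δ t hr0 hr1 hs ht0 ht1
    have hnum : 0 ≤ c1 * aR r p q δ t := mul_nonneg (by linarith) a0
    have hle : c1 * aR r p q δ t ≤ cmb r p q δ c1 c2 t := by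
      unfold cmb; nlinarith
    exact ⟨div_nonneg hnum hD.le, (div_le_one hD).2 hle⟩
  obtain ⟨g10, g11⟩ := hfrac e (1 - b) x hme he1 hmb' (by linarith) hx0 hx1
  obtain ⟨g20, g21⟩ := hfrac (1 - e) b x hme' (by linarith) hmb hb1 hx0 hx1
  obtain ⟨g30, g31⟩ := hfrac e (1 - e) y hme he1 hme' (by linarith) hy0 hy1
  obtain ⟨g40, g41⟩ := hfrac (1 - b) b y hmb' (by linarith) hmb hb1 hy0 hy1
  rw [← P1RR_eq r p q b e δ x] at g10 g11
  rw [← P1BR_eq r p q b e δ x] at g20 g21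
  rw [← P2RR_eq r p q b e δ y] at g30 g31
  rw [← P2BR_eq r p q b e δ y] at g40 g41
  have hGB : 0 ≤ P3RR r p q b e δ x y + P3BR r p q b e δ x y ∧
      P3RR r p q b e δ x y + P3BR r p q b e δ x y ≤ 1 := by
    rw [G_eq]
    have hu := cmb_ge r p q δ e (1 - e) y mm hr0 hr1 hs hy0 hy1 hm0.le hme hme'
    have hv := cmb_ge r p q δ (1 - b) b y mm hr0 hr1 hs hy0 hy1 hm0.le hmb' hmb
    have hu0 : 0 ≤ cmb r p q δ e (1 - e) y := le_trans (by positivity) hu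
    have hv0 : 0 ≤ cmb r p q δ (1 - b) b y := le_trans (by positivity) hv
    obtain ⟨a0, a1, b0, b1⟩ := aR_mem r p q δ x hr0 hr1 hs hx0 hx1
    have hsum := aRB_sum r p q δ x
    have hden : 0 < cmb r p q δ e (1 - e) y * aR r p q δ x
        + cmb r p q δ (1 - b) b y * aB r p q δ x := by
      nlinarith [mul_le_mul_of_nonneg_right hu a0, mul_le_mul_of_nonneg_right hv b0,
        mul_pos (mul_pos hm0 hS0) hS0]
    refine ⟨div_nonneg (mul_nonneg hu0 a0) hden.le, (div_le_one hden).2 ?_⟩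
    nlinarith [mul_nonneg hv0 b0]
  have hHB : 0 ≤ P3RR r p q b e δ x y + P3RB r p q b e δ x y ∧
      P3RR r p q b e δ x y + P3RB r p q b e δ x y ≤ 1 := by
    rw [H_eq]
    have hu := cmb_ge r p q δ e (1 - b) x mm hr0 hr1 hs hx0 hx1 hm0.le hme hmb'
    have hv := cmb_ge r p q δ (1 - e) b x mm hr0 hr1 hs hx0 hx1 hm0.le hme' hmb
    have hu0 : 0 ≤ cmb r p q δ e (1 - b) x := le_trans (by positivity) hu
    have hv0 : 0 ≤ cmb r p q δ (1 - e) b x := le_trans (by positivity) hv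
    obtain ⟨a0, a1, b0, b1⟩ := aR_mem r p q δ y hr0 hr1 hs hy0 hy1
    have hsum := aRB_sum r p q δ y
    have hden : 0 < cmb r p q δ e (1 - b) x * aR r p q δ y
        + cmb r p q δ (1 - e) b x * aB r p q δ y := by
      nlinarith [mul_le_mul_of_nonneg_right hu a0, mul_le_mul_of_nonneg_right hv b0,
        mul_pos (mul_pos hm0 hS0) hS0]
    refine ⟨div_nonneg (mul_nonneg hu0 a0) hden.le, (div_le_one hden).2 ?_⟩
    nlinarith [mul_nonneg hv0 b0]
  have hF1 : (F r p q b e δ (x, y)).1 = p * (r * P1RR r p q b e δ x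
      + (1 - r) * P1BR r p q b e δ x) + q * r
      + (1 - p - q) * (P3RR r p q b e δ x y + P3BR r p q b e δ x y) := rfl
  have hF2 : (F r p q b e δ (x, y)).2 = p * r + q * (r * P2RR r p q b e δ y
      + (1 - r) * P2BR r p q b e δ y)
      + (1 - p - q) * (P3RR r p q b e δ x y + P3RB r p q b e δ x y) := rfl
  rw [Set.mem_prod, hF1, hF2, Set.mem_Icc, Set.mem_Icc]
  have hc1 : 0 ≤ r * P1RR r p q b e δ x + (1 - r) * P1BR r p q b e δ x :=
    add_nonneg (mul_nonneg hr0 g10) (mul_nonneg (by linarith) g20)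
  have hc2 : r * P1RR r p q b e δ x + (1 - r) * P1BR r p q b e δ x ≤ 1 := by
    nlinarith [mul_le_mul_of_nonneg_left g11 hr0,
      mul_le_mul_of_nonneg_left g21 (by linarith : (0:ℝ) ≤ 1 - r)]
  have hc3 : 0 ≤ r * P2RR r p q b e δ y + (1 - r) * P2BR r p q b e δ y :=
    add_nonneg (mul_nonneg hr0 g30) (mul_nonneg (by linarith) g40)
  have hc4 : r * P2RR r p q b e δ y + (1 - r) * P2BR r p q b e δ y ≤ 1 := by
    nlinarith [mul_le_mul_of_nonneg_left g31 hr0,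
      mul_le_mul_of_nonneg_left g41 (by linarith : (0:ℝ) ≤ 1 - r)]
  refine ⟨⟨?_, ?_⟩, ?_, ?_⟩
  · have := mul_nonneg hp hc1
    have := mul_nonneg hq hr0
    have := mul_nonneg (by linarith : (0:ℝ) ≤ 1 - p - q) hGB.1
    linarith
  · have h1 := mul_le_mul_of_nonneg_left hc2 hp
    have h2 := mul_le_mul_of_nonneg_left hr1 hq
    have h3 := mul_le_mul_of_nonneg_left hGB.2 (by linarith : (0:ℝ) ≤ 1 - p - q)
    nlinarith
  · have := mul_nonneg hp hr0
    have := mul_nonneg hq hc3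
    have := mul_nonneg (by linarith : (0:ℝ) ≤ 1 - p - q) hHB.1
    linarith
  · have h1 := mul_le_mul_of_nonneg_left hr1 hp
    have h2 := mul_le_mul_of_nonneg_left hc4 hq
    have h3 := mul_le_mul_of_nonneg_left hHB.2 (by linarith : (0:ℝ) ≤ 1 - p - q)
    nlinarith

set_option maxHeartbeats 1000000 in
/-- Theorem 1 of the paper (fixed-point part): for sufficiently large `δ`, the
mean-field map `F` has a unique fixed point `θ*` in the unit square, and the
iterates `θ_{k+1} = F(θ_k)` converge to `θ*` from any initial point in the square. -/
theorem F_unique_fixed_point_and_convergence (r p q b e : ℝ)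
    (hr0 : 0 ≤ r) (hr1 : r ≤ 1) (hb0 : 0 < b) (hb1 : b < 1) (he0 : 0 < e) (he1 : e < 1)
    (hp : 0 ≤ p) (hq : 0 ≤ q) (hpq0 : 0 < p + q) (hpq : p + q ≤ 1) :
    ∃ δs : ℝ, 0 < δs ∧ ∀ δ : ℝ, δs < δ →
      ∃ θstar ∈ Set.Icc (0 : ℝ) 1 ×ˢ Set.Icc (0 : ℝ) 1,
        F r p q b e δ θstar = θstar ∧
        (∀ θ' ∈ Set.Icc (0 : ℝ) 1 ×ˢ Set.Icc (0 : ℝ) 1,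
          F r p q b e δ θ' = θ' → θ' = θstar) ∧
        ∀ θ₀ ∈ Set.Icc (0 : ℝ) 1 ×ˢ Set.Icc (0 : ℝ) 1,
          Filter.Tendsto (fun k : ℕ => (F r p q b e δ)^[k] θ₀) Filter.atTop (nhds θstar) := by
  have hm0 : 0 < min (min b (1 - b)) (min e (1 - e)) :=
    lt_min (lt_min hb0 (by linarith)) (lt_min he0 (by linarith))
  set mm := min (min b (1 - b)) (min e (1 - e)) with hmmdef
  have hmb : mm ≤ b := le_trans (min_le_left _ _) (min_le_left _ _)
  have hmb' : mm ≤ 1 - b := le_trans (min_le_left _ _) (min_le_right _ _)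
  have hme : mm ≤ e := le_trans (min_le_right _ _) (min_le_left _ _)
  have hme' : mm ≤ 1 - e := le_trans (min_le_right _ _) (min_le_right _ _)
  clear_value mm
  refine ⟨8 / ((p + q) * mm ^ 2), by positivity, fun δ hδ => ?_⟩
  have hδ0 : 0 < δ := lt_trans (by positivity) hδ
  have hs : 0 ≤ sVal p q δ := by
    unfold sVal; exact mul_nonneg (by linarith) hδ0.le
  have hbig : 8 ≤ mm ^ 2 * (1 + sVal p q δ) := by
    have h2 : 8 < δ * ((p + q) * mm ^ 2) := (div_lt_iff₀ (by positivity)).mp hδ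
    unfold sVal
    nlinarith [sq_nonneg mm]
  set sq : Set (ℝ × ℝ) := Set.Icc (0 : ℝ) 1 ×ˢ Set.Icc (0 : ℝ) 1 with hsqdef
  have hsc : IsComplete sq := (IsClosed.prod isClosed_Icc isClosed_Icc).isComplete
  have hsf : Set.MapsTo (F r p q b e δ) sq sq := by
    rintro ⟨a1, a2⟩ ⟨ha1, ha2⟩
    exact F_maps r p q b e δ a1 a2 mm hr0 hr1 hp hq hpq hs hm0 hme hme' hmb hmb'
      ha1.1 ha1.2 ha2.1 ha2.2
  have hlip : ∀ u ∈ sq, ∀ w ∈ sq,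
      dist (F r p q b e δ u) (F r p q b e δ w) ≤ 1 / 2 * dist u w := by
    rintro ⟨u1, u2⟩ ⟨hu1, hu2⟩ ⟨w1, w2⟩ ⟨hw1, hw2⟩
    obtain ⟨c1, c2⟩ := F_lip r p q b e δ u1 u2 w1 w2 mm hr0 hr1 hp hq hpq hs hm0
      hme hme' hmb hmb' hbig hu1.1 hu1.2 hu2.1 hu2.2 hw1.1 hw1.2 hw2.1 hw2.2
    rw [Prod.dist_eq, Prod.dist_eq, Real.dist_eq, Real.dist_eq, Real.dist_eq, Real.dist_eq]
    have hmax : (1:ℝ)/2 * max |u1 - w1| |u2 - w2|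
        ≤ 1/2 * max |u1 - w1| |u2 - w2| := le_refl _
    exact max_le c1 c2
  have hcontr : ContractingWith (1/2 : NNReal) (hsf.restrict (F r p q b e δ) sq sq) := by
    constructor
    · rw [← NNReal.coe_lt_coe]; norm_num
    · apply LipschitzWith.of_dist_le_mul
      rintro ⟨u, hu⟩ ⟨w, hw⟩
      have h := hlip u hu w hw
      rw [Subtype.dist_eq, Subtype.dist_eq, Set.MapsTo.val_restrict_apply,
        Set.MapsTo.val_restrict_apply]
      calc dist (F r p q b e δ u) (F r p q b e δ w) ≤ 1 / 2 * dist u w := h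
        _ = ((1/2 : NNReal) : ℝ) * dist u w := by norm_num
  have h00 : ((0:ℝ), (0:ℝ)) ∈ sq := ⟨⟨le_refl 0, zero_le_one⟩, ⟨le_refl 0, zero_le_one⟩⟩
  obtain ⟨θstar, hθmem, hθfix, htend0, -⟩ :=
    hcontr.exists_fixedPoint' hsc hsf h00 (edist_ne_top _ _)
  have huniq : ∀ θ' ∈ sq, F r p q b e δ θ' = θ' → θ' = θstar := by
    intro θ' hθ' hfix'
    have h := hlip θ' hθ' θstar hθmem
    rw [hfix', hθfix] at h
    have h0 : dist θ' θstar ≤ 0 := by linarith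
    exact eq_of_dist_eq_zero (le_antisymm h0 dist_nonneg)
  refine ⟨θstar, hθmem, hθfix, huniq, ?_⟩
  intro θ₀ hθ₀
  obtain ⟨y₀, hy₀s, hy₀fix, hy₀tend, -⟩ :=
    hcontr.exists_fixedPoint' hsc hsf hθ₀ (edist_ne_top _ _)
  have hy₀eq : y₀ = θstar := huniq y₀ hy₀s hy₀fix
  exact hy₀eq ▸ hy₀tend
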